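/- Let R be a commutative ring, α, β ∈ R, and n ≥ 1 a natural number. Set x = ∑_{k=1}^{n−1} α^{n−k}·β^{k}. Then xⁿ = ∑_{k=2}^{n} (n.choose k)·(α·β)ⁿ·(∑_{j=0}^{k−2} α^{n·j}·β^{n·(k−2−j)})·x^{n−k}. -/

import Mathlib

open Finset

private lemma bezout_mul_key {R : Type*} [CommRing R] (α β : R) (n : ℕ) (hn : 1 ≤ n) :
    (α ^ n - β ^ n) * (∑ k ∈ Finset.Icc 1 (n - 1), α ^ (n - k) * β ^ k) ^ n =
      (α ^ n - β ^ n) * ∑ k ∈ Finset.Icc 2 n, (n.choose k : R) * (α * β) ^ n *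
        (∑ j ∈ Finset.range (k - 1), α ^ (n * j) * β ^ (n * (k - 2 - j))) *
        (∑ k' ∈ Finset.Icc 1 (n - 1), α ^ (n - k') * β ^ k') ^ (n - k) := by
  set x := ∑ k ∈ Finset.Icc 1 (n - 1), α ^ (n - k) * β ^ k with hx
  set S := ∑ k ∈ Finset.range n, α ^ (n - 1 - k) * β ^ k with hS
  set a := α ^ n with ha
  set b := β ^ n with hb
  -- x + a = α * S
  have hrange : Finset.range n = insert 0 (Finset.Icc 1 (n - 1)) := by
    ext k; simp only [Finset.mem_range, Finset.mem_insert, Finset.mem_Icc]; omega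
  have hxa : a + x = α * S := by
    have h1 : α * S = ∑ k ∈ Finset.range n, α ^ (n - k) * β ^ k := by
      rw [hS, Finset.mul_sum]
      refine Finset.sum_congr rfl fun k hk => ?_
      have hk' : k < n := Finset.mem_range.mp hk
      rw [← mul_assoc, ← pow_succ']
      congr 2
      omega
    rw [h1, hrange, Finset.sum_insert (by simp)]
    simp [ha, hx]
  have hxb : b + x = β * S := by
    have h1 : β * S = ∑ k ∈ Finset.range n, α ^ (n - (1 + k)) * β ^ (1 + k) := by
      rw [hS, Finset.mul_sum]
      refine Finset.sum_congr rfl fun k hk => ?_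
      have hk' : k < n := Finset.mem_range.mp hk
      rw [pow_add, pow_one]
      ring_nf
      congr 2
      omega
    have h2 : ∑ k ∈ Finset.Icc 1 n, α ^ (n - k) * β ^ k
        = ∑ k ∈ Finset.range n, α ^ (n - (1 + k)) * β ^ (1 + k) := by
      rw [← Finset.Ico_add_one_right_eq_Icc, Finset.sum_Ico_eq_sum_range]
      simp
    have h3 : Finset.Icc 1 n = insert n (Finset.Icc 1 (n - 1)) := by
      ext k; simp only [Finset.mem_insert, Finset.mem_Icc]; omega
    rw [h1, ← h2, h3, Finset.sum_insert (by simp; omega)]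
    simp [hb, add_comm, hx]
  -- per-term rewriting on RHS
  rw [Finset.mul_sum]
  have hterm : ∀ k ∈ Finset.Icc 2 n,
      (a - b) * ((n.choose k : R) * (α * β) ^ n *
        (∑ j ∈ Finset.range (k - 1), α ^ (n * j) * β ^ (n * (k - 2 - j))) * x ^ (n - k))
      = (n.choose k : R) * (a ^ k * b) * x ^ (n - k)
        - (n.choose k : R) * (a * b ^ k) * x ^ (n - k) := by
    intro k hk
    obtain ⟨hk2, hkn⟩ := Finset.mem_Icc.mp hk
    have hgeom : (∑ j ∈ Finset.range (k - 1), α ^ (n * j) * β ^ (n * (k - 2 - j))) * (a - b)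
        = a ^ (k - 1) - b ^ (k - 1) := by
      have := geom_sum₂_mul a b (k - 1)
      rw [← this]
      congr 1
      refine Finset.sum_congr rfl fun j hj => ?_
      rw [ha, hb, ← pow_mul, ← pow_mul]
      congr 2
    have hab : (α * β) ^ n = a * b := mul_pow α β n
    have hsplit : a * b * (a ^ (k - 1) - b ^ (k - 1)) = a ^ k * b - a * b ^ k := by
      have h1 : a * a ^ (k - 1) = a ^ k := by
        rw [← pow_succ']; congr 1; omega
      have h2 : b * b ^ (k - 1) = b ^ k := by
        rw [← pow_succ']; congr 1; omega
      rw [mul_sub]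
      rw [show a * b * a ^ (k-1) = (a * a ^ (k-1)) * b by ring,
          show a * b * b ^ (k-1) = a * (b * b ^ (k-1)) by ring, h1, h2]
    calc (a - b) * ((n.choose k : R) * (α * β) ^ n *
          (∑ j ∈ Finset.range (k - 1), α ^ (n * j) * β ^ (n * (k - 2 - j))) * x ^ (n - k))
        = (n.choose k : R) * ((α * β) ^ n *
          ((∑ j ∈ Finset.range (k - 1), α ^ (n * j) * β ^ (n * (k - 2 - j))) * (a - b)))
            * x ^ (n - k) := by ring
      _ = (n.choose k : R) * (a * b * (a ^ (k - 1) - b ^ (k - 1))) * x ^ (n - k) := by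
            rw [hgeom, hab]
      _ = _ := by rw [hsplit]; ring
  rw [Finset.sum_congr rfl hterm, Finset.sum_sub_distrib]
  -- binomial sums
  have hsum_split : ∀ f : ℕ → R,
      ∑ k ∈ Finset.range (n + 1), f k = f 0 + f 1 + ∑ k ∈ Finset.Icc 2 n, f k := by
    intro f
    have h2 : Finset.range (n + 1) = insert 0 (insert 1 (Finset.Icc 2 n)) := by
      ext k; simp only [Finset.mem_range, Finset.mem_insert, Finset.mem_Icc]; omega
    rw [h2, Finset.sum_insert (by simp), Finset.sum_insert (by simp)]
    ring
  have hA : ∑ k ∈ Finset.Icc 2 n, (n.choose k : R) * (a ^ k * b) * x ^ (n - k)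
      = b * ((a + x) ^ n - x ^ n - (n : R) * a * x ^ (n - 1)) := by
    have hbin := add_pow a x n
    rw [hsum_split (fun k => a ^ k * x ^ (n - k) * (n.choose k : R))] at hbin
    simp only [pow_zero, Nat.sub_zero, Nat.choose_zero_right, Nat.cast_one, mul_one, one_mul,
      pow_one, Nat.choose_one_right] at hbin
    have : ∑ k ∈ Finset.Icc 2 n, a ^ k * x ^ (n - k) * (n.choose k : R)
        = (a + x) ^ n - x ^ n - (n : R) * a * x ^ (n - 1) := by
      rw [hbin]; ring
    rw [← this, Finset.mul_sum]
    refine Finset.sum_congr rfl fun k hk => by ring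
  have hB : ∑ k ∈ Finset.Icc 2 n, (n.choose k : R) * (a * b ^ k) * x ^ (n - k)
      = a * ((b + x) ^ n - x ^ n - (n : R) * b * x ^ (n - 1)) := by
    have hbin := add_pow b x n
    rw [hsum_split (fun k => b ^ k * x ^ (n - k) * (n.choose k : R))] at hbin
    simp only [pow_zero, Nat.sub_zero, Nat.choose_zero_right, Nat.cast_one, mul_one, one_mul,
      pow_one, Nat.choose_one_right] at hbin
    have : ∑ k ∈ Finset.Icc 2 n, b ^ k * x ^ (n - k) * (n.choose k : R)
        = (b + x) ^ n - x ^ n - (n : R) * b * x ^ (n - 1) := by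
      rw [hbin]; ring
    rw [← this, Finset.mul_sum]
    refine Finset.sum_congr rfl fun k hk => by ring
  rw [hA, hB, hxa, hxb, mul_pow, mul_pow, ← ha, ← hb]
  ring
theorem bezout_sum_of_radicals_root {R : Type*} [CommRing R] (α β : R) (n : ℕ)
    (hn : 1 ≤ n) :
    (∑ k ∈ Finset.Icc 1 (n - 1), α ^ (n - k) * β ^ k) ^ n =
      ∑ k ∈ Finset.Icc 2 n, (n.choose k : R) * (α * β) ^ n *
        (∑ j ∈ Finset.range (k - 1), α ^ (n * j) * β ^ (n * (k - 2 - j))) *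
        (∑ k' ∈ Finset.Icc 1 (n - 1), α ^ (n - k') * β ^ k') ^ (n - k) := by
  -- first prove it in ℤ[X₀, X₁], a domain, by cancelling X₀ⁿ - X₁ⁿ
  set A := MvPolynomial (Fin 2) ℤ
  set α₀ : A := MvPolynomial.X 0
  set β₀ : A := MvPolynomial.X 1
  have hne : α₀ ^ n - β₀ ^ n ≠ 0 := by
    intro h
    rw [sub_eq_zero] at h
    have := congrArg (MvPolynomial.eval fun i : Fin 2 => if i = 0 then (2 : ℤ) else 0) h
    simp [α₀, β₀, zero_pow (by omega : n ≠ 0)] at this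
  have hkey : (∑ k ∈ Finset.Icc 1 (n - 1), α₀ ^ (n - k) * β₀ ^ k) ^ n =
      ∑ k ∈ Finset.Icc 2 n, (n.choose k : A) * (α₀ * β₀) ^ n *
        (∑ j ∈ Finset.range (k - 1), α₀ ^ (n * j) * β₀ ^ (n * (k - 2 - j))) *
        (∑ k' ∈ Finset.Icc 1 (n - 1), α₀ ^ (n - k') * β₀ ^ k') ^ (n - k) :=
    mul_left_cancel₀ hne (bezout_mul_key α₀ β₀ n hn)
  have := congrArg (MvPolynomial.aeval ![α, β]) hkey
  simpa [α₀, β₀, map_sum, map_pow, map_mul, map_natCast] using this
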